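/- For any finite ranked poset P, rowmotion Row and the gyration toggle-group element Gyr are conjugate elements of the toggle group T(P); equivalently, there exists a bijection φ: J(P) → J(P) (an element of T(P)) such that φ ∘ Row = Gyr ∘ φ, so J(P) under Row and J(P) under Gyr are in equivariant bijection. -/

import Mathlib

open Classical in
/-- The toggle `t_q` on the set `J(P)` of order ideals (= lower sets) of a poset:
`t_q(X) = X ∪ {q}` if `q ∉ X` and `X ∪ {q} ∈ J(P)`; `t_q(X) = X \ {q}` if `q ∈ X`
and `X \ {q} ∈ J(P)`; and `t_q(X) = X` otherwise. -/
noncomputable def togGen {α : Type*} [PartialOrder α] (q : α)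
    (X : {S : Set α // IsLowerSet S}) : {S : Set α // IsLowerSet S} :=
  if h : q ∉ X.1 ∧ IsLowerSet (X.1 ∪ {q}) then ⟨X.1 ∪ {q}, h.2⟩
  else if h' : q ∈ X.1 ∧ IsLowerSet (X.1 \ {q}) then ⟨X.1 \ {q}, h'.2⟩
  else X

/-- Apply the toggles of the elements listed in `L`, left to right.  The elements of
the toggle group `T(P)` are exactly the maps of this form for words `L` (toggles are
involutions, so the group they generate coincides with the monoid they generate). -/
noncomputable def applyToggles {α : Type*} [PartialOrder α] (L : List α)
    (X : {S : Set α // IsLowerSet S}) : {S : Set α // IsLowerSet S} :=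
  L.foldl (fun Y q => togGen q Y) X

/-- Rowmotion on order ideals: `Row(X)` is the order ideal generated by the minimal
elements of the complement of `X`. -/
def rowmotion {α : Type*} [PartialOrder α] (X : {S : Set α // IsLowerSet S}) :
    {S : Set α // IsLowerSet S} :=
  ⟨{z | ∃ y, (y ∉ X.1 ∧ ∀ w, w ∉ X.1 → w ≤ y → w = y) ∧ z ≤ y}, by
    intro a b hba ha
    obtain ⟨y, hy, hay⟩ := ha
    exact ⟨y, hy, hba.trans hay⟩⟩

section Part1
variable {α : Type*} [PartialOrder α]

lemma sw_lower_union {X : Set α} (hX : IsLowerSet X) (p : α) :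
    IsLowerSet (X ∪ {p}) ↔ ∀ w, w < p → w ∈ X := by
  constructor
  · intro h w hw
    have : w ∈ X ∪ {p} := h hw.le (by simp)
    rcases this with h' | h'
    · exact h'
    · exact absurd h' (by simpa using hw.ne)
  · intro h a b hab hb
    rcases hb with hb | hb
    · exact Or.inl (hX hab hb)
    · have hap : a = p := by simpa using hb
      rcases eq_or_lt_of_le (hab.trans_eq hap) with h2 | h2
      · exact Or.inr (by simpa using h2)
      · exact Or.inl (h b h2)

lemma sw_lower_diff {X : Set α} (hX : IsLowerSet X) (p : α) :
    IsLowerSet (X \ {p}) ↔ ∀ w, p < w → w ∉ X := by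
  constructor
  · intro h w hw hwX
    have : p ∈ X \ {p} := h hw.le ⟨hwX, by simpa using hw.ne'⟩
    exact this.2 rfl
  · intro h a b hab hb
    refine ⟨hX hab hb.1, ?_⟩
    intro hbp
    have hbp' : b = p := by simpa using hbp
    have hap : a ≠ p := by simpa using hb.2
    have : p < a := lt_of_le_of_ne (hbp' ▸ hab) (Ne.symm hap)
    exact h a this hb.1

variable (q : α) (X : {S : Set α // IsLowerSet S})

lemma sw_togGen_add' (h1 : q ∉ X.1) (h2 : IsLowerSet (X.1 ∪ {q})) :
    togGen q X = ⟨X.1 ∪ {q}, h2⟩ := by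
  rw [togGen, dif_pos ⟨h1, h2⟩]

lemma sw_togGen_del' (h1 : q ∈ X.1) (h2 : IsLowerSet (X.1 \ {q})) :
    togGen q X = ⟨X.1 \ {q}, h2⟩ := by
  rw [togGen, dif_neg (fun h => h.1 h1), dif_pos ⟨h1, h2⟩]

lemma sw_togGen_fix_out (h1 : q ∉ X.1) (h2 : ¬ ∀ w, w < q → w ∈ X.1) :
    togGen q X = X := by
  rw [togGen, dif_neg (fun h => h2 ((sw_lower_union X.2 q).mp h.2)),
    dif_neg (fun h => h1 h.1)]

lemma sw_togGen_fix_in (h1 : q ∈ X.1) (h2 : ¬ ∀ w, q < w → w ∉ X.1) :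
    togGen q X = X := by
  rw [togGen, dif_neg (fun h => h.1 h1),
    dif_neg (fun h => h2 ((sw_lower_diff X.2 q).mp h.2))]

lemma sw_mem_togGen_ne {x : α} (h : x ≠ q) :
    x ∈ (togGen q X).1 ↔ x ∈ X.1 := by
  rw [togGen]
  split_ifs <;> simp [h]

lemma sw_togGen_invol : togGen q (togGen q X) = X := by
  by_cases h1 : q ∈ X.1
  · by_cases h2 : IsLowerSet (X.1 \ {q})
    · rw [sw_togGen_del' q X h1 h2]
      have hs : (X.1 \ {q}) ∪ {q} = X.1 := by
        ext x; by_cases hx : x = q <;> simp [hx, h1]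
      have h3 : IsLowerSet ((X.1 \ {q}) ∪ {q}) := by rw [hs]; exact X.2
      rw [sw_togGen_add' q _ (by simp) h3]
      exact Subtype.ext hs
    · rw [sw_togGen_fix_in q X h1 (fun h => h2 ((sw_lower_diff X.2 q).mpr h)),
        sw_togGen_fix_in q X h1 (fun h => h2 ((sw_lower_diff X.2 q).mpr h))]
  · by_cases h2 : IsLowerSet (X.1 ∪ {q})
    · rw [sw_togGen_add' q X h1 h2]
      have hs : (X.1 ∪ {q}) \ {q} = X.1 := by
        ext x; by_cases hx : x = q <;> simp [hx, h1]
      have h3 : IsLowerSet ((X.1 ∪ {q}) \ {q}) := by rw [hs]; exact X.2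
      rw [sw_togGen_del' q _ (by simp) h3]
      exact Subtype.ext hs
    · rw [sw_togGen_fix_out q X h1 (fun h => h2 ((sw_lower_union X.2 q).mpr h)),
        sw_togGen_fix_out q X h1 (fun h => h2 ((sw_lower_union X.2 q).mpr h))]

end Part1
section Part2
variable {α : Type*} [PartialOrder α]

lemma sw_togGen_cases (q : α) (X : {S : Set α // IsLowerSet S}) :
    (togGen q X).1 = X.1 ∨
    ((togGen q X).1 = X.1 ∪ {q} ∧ q ∉ X.1 ∧ ∀ w, w < q → w ∈ X.1) ∨
    ((togGen q X).1 = X.1 \ {q} ∧ q ∈ X.1 ∧ ∀ w, q < w → w ∉ X.1) := by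
  rw [togGen]
  split_ifs with h h'
  · exact Or.inr (Or.inl ⟨rfl, h.1, (sw_lower_union X.2 q).mp h.2⟩)
  · exact Or.inr (Or.inr ⟨rfl, h'.1, (sw_lower_diff X.2 q).mp h'.2⟩)
  · exact Or.inl rfl

lemma sw_EA (p q : α) (X : {S : Set α // IsLowerSet S}) (hq : p ≠ q) (h2 : ¬ q ⋖ p) :
    (∀ w, w < p → w ∈ (togGen q X).1) ↔ (∀ w, w < p → w ∈ X.1) := by
  rcases sw_togGen_cases q X with h | ⟨h, hq1, hq2⟩ | ⟨h, hq1, hq2⟩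
  · rw [h]
  · rw [h]
    by_cases hqp : q < p
    · obtain ⟨c, hc1, hc2⟩ := (not_covBy_iff hqp).mp h2
      refine iff_of_false ?_ ?_
      · intro hall
        rcases hall c hc2 with hcX | hcq
        · exact hq1 (X.2 hc1.le hcX)
        · exact hc1.ne' (by simpa using hcq)
      · intro hall
        exact hq1 (X.2 hc1.le (hall c hc2))
    · constructor
      · intro hall w hw
        rcases hall w hw with h' | h'
        · exact h'
        · exact absurd (by simpa using h' : w = q) (fun he => hqp (he ▸ hw))
      · intro hall w hw
        exact Or.inl (hall w hw)
  · rw [h]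
    by_cases hqp : q < p
    · obtain ⟨c, hc1, hc2⟩ := (not_covBy_iff hqp).mp h2
      have hcX : c ∉ X.1 := hq2 c hc1
      refine iff_of_false ?_ ?_
      · intro hall
        exact hcX (hall c hc2).1
      · intro hall
        exact hcX (hall c hc2)
    · constructor
      · intro hall w hw
        exact (hall w hw).1
      · intro hall w hw
        refine ⟨hall w hw, ?_⟩
        simp only [Set.mem_singleton_iff]
        intro he
        exact hqp (he ▸ hw)

lemma sw_ER (p q : α) (X : {S : Set α // IsLowerSet S}) (hq : p ≠ q) (h1 : ¬ p ⋖ q) :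
    (∀ w, p < w → w ∉ (togGen q X).1) ↔ (∀ w, p < w → w ∉ X.1) := by
  rcases sw_togGen_cases q X with h | ⟨h, hq1, hq2⟩ | ⟨h, hq1, hq2⟩
  · rw [h]
  · rw [h]
    by_cases hpq : p < q
    · obtain ⟨c, hc1, hc2⟩ := (not_covBy_iff hpq).mp h1
      have hcX : c ∈ X.1 := hq2 c hc2
      refine iff_of_false ?_ ?_
      · intro hall
        exact hall c hc1 (Or.inl hcX)
      · intro hall
        exact hall c hc1 hcX
    · constructor
      · intro hall w hw hwX
        exact hall w hw (Or.inl hwX)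
      · intro hall w hw hwm
        rcases hwm with h' | h'
        · exact hall w hw h'
        · exact hpq ((by simpa using h' : w = q) ▸ hw)
  · rw [h]
    by_cases hpq : p < q
    · obtain ⟨c, hc1, hc2⟩ := (not_covBy_iff hpq).mp h1
      have hcX : c ∈ X.1 := X.2 hc2.le hq1
      refine iff_of_false ?_ ?_
      · intro hall
        exact hall c hc1 ⟨hcX, by simpa using hc2.ne⟩
      · intro hall
        exact hall c hc1 hcX
    · constructor
      · intro hall w hw hwX
        refine hall w hw ⟨hwX, ?_⟩
        simp only [Set.mem_singleton_iff]
        intro he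
        exact hpq (he ▸ hw)
      · intro hall w hw hwm
        exact hall w hw hwm.1

lemma sw_decision (p : α) (X Y : {S : Set α // IsLowerSet S})
    (E0 : (p ∈ Y.1) ↔ (p ∈ X.1))
    (EA : (∀ w, w < p → w ∈ Y.1) ↔ (∀ w, w < p → w ∈ X.1))
    (ER : (∀ w, p < w → w ∉ Y.1) ↔ (∀ w, p < w → w ∉ X.1)) :
    (p ∈ (togGen p Y).1 ↔ p ∈ (togGen p X).1) := by
  by_cases hm : p ∈ X.1
  · by_cases hd : ∀ w, p < w → w ∉ X.1
    · rw [sw_togGen_del' p X hm ((sw_lower_diff X.2 p).mpr hd),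
        sw_togGen_del' p Y (E0.mpr hm) ((sw_lower_diff Y.2 p).mpr (ER.mpr hd))]
      simp
    · rw [sw_togGen_fix_in p X hm hd,
        sw_togGen_fix_in p Y (E0.mpr hm) (fun h => hd (ER.mp h))]
      exact E0
  · by_cases ha : ∀ w, w < p → w ∈ X.1
    · rw [sw_togGen_add' p X hm ((sw_lower_union X.2 p).mpr ha),
        sw_togGen_add' p Y (fun h => hm (E0.mp h)) ((sw_lower_union Y.2 p).mpr (EA.mpr ha))]
      simp
    · rw [sw_togGen_fix_out p X hm ha,
        sw_togGen_fix_out p Y (fun h => hm (E0.mp h)) (fun h => ha (EA.mp h))]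
      exact E0

lemma sw_stab (p q : α) (X : {S : Set α // IsLowerSet S}) (hpq : p ≠ q)
    (h1 : ¬ p ⋖ q) (h2 : ¬ q ⋖ p) :
    p ∈ (togGen p (togGen q X)).1 ↔ p ∈ (togGen p X).1 :=
  sw_decision p X (togGen q X) (sw_mem_togGen_ne q X hpq)
    (sw_EA p q X hpq h2) (sw_ER p q X hpq h1)

lemma sw_comm (p q : α) (hpq : p ≠ q) (h1 : ¬ p ⋖ q) (h2 : ¬ q ⋖ p)
    (X : {S : Set α // IsLowerSet S}) :
    togGen p (togGen q X) = togGen q (togGen p X) := by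
  apply Subtype.ext
  ext x
  by_cases hx : x = p
  · subst hx
    rw [sw_stab x q X hpq h1 h2]
    exact (sw_mem_togGen_ne q (togGen x X) hpq).symm
  · by_cases hx' : x = q
    · subst hx'
      rw [sw_mem_togGen_ne p (togGen x X) hx]
      exact (sw_stab x p X (Ne.symm hpq) h2 h1).symm
    · rw [sw_mem_togGen_ne p (togGen q X) hx, sw_mem_togGen_ne q X hx',
        sw_mem_togGen_ne q (togGen p X) hx', sw_mem_togGen_ne p X hx]

end Part2

section Part3
variable {α : Type*} [PartialOrder α]

lemma sw_mem_row {X : {S : Set α // IsLowerSet S}} {z : α} :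
    z ∈ (rowmotion X).1 ↔ ∃ y, (y ∉ X.1 ∧ ∀ w, w ∉ X.1 → w ≤ y → w = y) ∧ z ≤ y :=
  Iff.rfl

lemma sw_qdec (q : α) (X Y : {S : Set α // IsLowerSet S})
    (ha : q ∈ Y.1 ↔ q ∈ X.1)
    (hb : ∀ w, w < q → (w ∈ Y.1 ↔ w ∈ X.1))
    (hc : ∀ w, q < w → (w ∈ Y.1 ↔ w ∈ (rowmotion X).1)) :
    (q ∈ (togGen q Y).1 ↔ q ∈ (rowmotion X).1) := by
  by_cases hqx : q ∈ X.1
  · by_cases hdel : ∀ w, q < w → w ∉ Y.1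
    · rw [sw_togGen_del' q Y (ha.mpr hqx) ((sw_lower_diff Y.2 q).mpr hdel)]
      refine iff_of_false (fun h => h.2 rfl) ?_
      rintro ⟨y, ⟨hy1, hy2⟩, hqy⟩
      have hyq : y ≠ q := fun h => hy1 (h ▸ hqx)
      have hlt : q < y := hqy.lt_of_ne (fun h => hyq h.symm)
      have hyrow : y ∈ (rowmotion X).1 := ⟨y, ⟨hy1, hy2⟩, le_refl y⟩
      exact hdel y hlt ((hc y hlt).mpr hyrow)
    · rw [sw_togGen_fix_in q Y (ha.mpr hqx) hdel]
      push_neg at hdel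
      obtain ⟨w, hqw, hwY⟩ := hdel
      have hwrow := (hc w hqw).mp hwY
      exact iff_of_true (ha.mpr hqx) ((rowmotion X).2 hqw.le hwrow)
  · by_cases hadd : ∀ w, w < q → w ∈ Y.1
    · rw [sw_togGen_add' q Y (fun h => hqx (ha.mp h)) ((sw_lower_union Y.2 q).mpr hadd)]
      refine iff_of_true (Or.inr rfl) ?_
      refine ⟨q, ⟨hqx, ?_⟩, le_refl q⟩
      intro w hw hwq
      by_contra hne
      have hlt : w < q := lt_of_le_of_ne hwq hne
      exact hw ((hb w hlt).mp (hadd w hlt))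
    · rw [sw_togGen_fix_out q Y (fun h => hqx (ha.mp h)) hadd]
      push_neg at hadd
      obtain ⟨w, hwq, hwY⟩ := hadd
      refine iff_of_false (fun h => hqx (ha.mp h)) ?_
      rintro ⟨y, ⟨hy1, hy2⟩, hqy⟩
      have hwX : w ∉ X.1 := fun h => hwY ((hb w hwq).mpr h)
      have := hy2 w hwX (hwq.le.trans hqy)
      exact absurd this (ne_of_lt (lt_of_lt_of_le hwq hqy))

lemma sw_CFF_aux (X : {S : Set α // IsLowerSet S}) : ∀ (w : List α) (S : Set α)
    (Y : {S : Set α // IsLowerSet S}),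
    w.Nodup → List.Pairwise (fun a b => ¬ a < b) w →
    (∀ q ∈ w, q ∉ S) →
    (∀ q ∈ w, ∀ a, a < q → a ∉ S) →
    (∀ q ∈ w, ∀ a, q < a → a ∈ S ∨ a ∈ w) →
    (∀ x, x ∉ S → (x ∈ Y.1 ↔ x ∈ X.1)) →
    (∀ x ∈ S, (x ∈ Y.1 ↔ x ∈ (rowmotion X).1)) →
    ∀ x, (x ∈ S ∨ x ∈ w) → (x ∈ (applyToggles w Y).1 ↔ x ∈ (rowmotion X).1) := by
  intro w
  induction w with
  | nil =>
    intro S Y _ _ _ _ _ _ h7 x hx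
    rcases hx with hx | hx
    · exact h7 x hx
    · simp at hx
  | cons q w' ih =>
    intro S Y hnd hpw hSw hdown hup h6 h7 x hx
    have hq_notin : q ∉ w' := (List.nodup_cons.mp hnd).1
    have hnd' := (List.nodup_cons.mp hnd).2
    have hphead := (List.pairwise_cons.mp hpw).1
    have hpw' := (List.pairwise_cons.mp hpw).2
    have hqS : q ∉ S := hSw q (List.mem_cons_self)
    have ha : q ∈ Y.1 ↔ q ∈ X.1 := h6 q hqS
    have hb : ∀ v, v < q → (v ∈ Y.1 ↔ v ∈ X.1) :=
      fun v hv => h6 v (hdown q (List.mem_cons_self) v hv)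
    have hcS : ∀ v, q < v → v ∈ S := by
      intro v hv
      rcases hup q (List.mem_cons_self) v hv with h | h
      · exact h
      · rcases List.mem_cons.mp h with h' | h'
        · exact absurd (h' ▸ hv) (lt_irrefl q)
        · exact absurd hv (hphead v h')
    have hc : ∀ v, q < v → (v ∈ Y.1 ↔ v ∈ (rowmotion X).1) :=
      fun v hv => h7 v (hcS v hv)
    have hqdec := sw_qdec q X Y ha hb hc
    have step : applyToggles (q :: w') Y = applyToggles w' (togGen q Y) := rfl
    rw [step]
    refine ih (insert q S) (togGen q Y) hnd' hpw' ?_ ?_ ?_ ?_ ?_ x ?_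
    · intro q' hq' hmem
      rcases Set.mem_insert_iff.mp hmem with h' | h'
      · exact hq_notin (h' ▸ hq')
      · exact hSw q' (List.mem_cons_of_mem q hq') h'
    · intro q' hq' a haq' hmem
      rcases Set.mem_insert_iff.mp hmem with h' | h'
      · exact hphead q' hq' (h' ▸ haq')
      · exact hdown q' (List.mem_cons_of_mem q hq') a haq' h'
    · intro q' hq' a hq'a
      rcases hup q' (List.mem_cons_of_mem q hq') a hq'a with h | h
      · exact Or.inl (Set.mem_insert_of_mem _ h)
      · rcases List.mem_cons.mp h with h' | h'
        · exact Or.inl (h' ▸ Set.mem_insert _ _)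
        · exact Or.inr h'
    · intro x' hx'
      have hx'q : x' ≠ q := fun h => hx' (h ▸ Set.mem_insert _ _)
      have hx'S : x' ∉ S := fun h => hx' (Set.mem_insert_of_mem _ h)
      rw [sw_mem_togGen_ne q Y hx'q]
      exact h6 x' hx'S
    · intro x' hx'
      rcases Set.mem_insert_iff.mp hx' with h' | h'
      · subst h'
        exact hqdec
      · rw [sw_mem_togGen_ne q Y (fun h => hqS (h ▸ h'))]
        exact h7 x' h'
    · rcases hx with h' | h'
      · exact Or.inl (Set.mem_insert_of_mem _ h')
      · rcases List.mem_cons.mp h' with h'' | h''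
        · exact Or.inl (h'' ▸ Set.mem_insert _ _)
        · exact Or.inr h''

lemma sw_CFF (X : {S : Set α // IsLowerSet S}) (w : List α)
    (hnd : w.Nodup) (hpw : List.Pairwise (fun a b => ¬ a < b) w)
    (hall : ∀ a : α, a ∈ w) :
    applyToggles w X = rowmotion X := by
  apply Subtype.ext
  ext x
  exact sw_CFF_aux X w ∅ X hnd hpw (by simp) (by simp) (fun q _ a _ => Or.inr (hall a))
    (fun x _ => Iff.rfl) (by simp) x (Or.inr (hall x))

end Part3
section Word
variable {β J : Type*} (act : J → β → J)

def appW (l : List β) (X : J) : J := l.foldl act X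

lemma appW_nil (X : J) : appW act ([] : List β) X = X := rfl

lemma appW_cons (b : β) (l : List β) (X : J) :
    appW act (b :: l) X = appW act l (act X b) := rfl

lemma appW_append (s t : List β) (X : J) :
    appW act (s ++ t) X = appW act t (appW act s X) := List.foldl_append

def FeqW (s t : List β) : Prop := ∀ X, appW act s X = appW act t X

def CjW (m s t : List β) : Prop :=
  ∀ X, appW act m (appW act s X) = appW act t (appW act m X)

lemma feqW_trans {s t u : List β} (h1 : FeqW act s t) (h2 : FeqW act t u) :
    FeqW act s u := fun X => (h1 X).trans (h2 X)

lemma feqW_symm {s t : List β} (h : FeqW act s t) : FeqW act t s :=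
  fun X => (h X).symm

lemma feqW_append_left {s t : List β} (z : List β) (h : FeqW act s t) :
    FeqW act (z ++ s) (z ++ t) := by
  intro X
  rw [appW_append, appW_append]
  exact h _

lemma feqW_append_right {s t : List β} (z : List β) (h : FeqW act s t) :
    FeqW act (s ++ z) (t ++ z) := by
  intro X
  rw [appW_append, appW_append, h]

lemma sw_act_slide {b : β} {u : List β}
    (hcomm : ∀ c ∈ u, ∀ X, act (act X b) c = act (act X c) b) :
    ∀ X, appW act u (act X b) = act (appW act u X) b := by
  induction u with
  | nil => intro X; rfl
  | cons c u' ih =>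
    intro X
    rw [appW_cons, appW_cons, hcomm c (List.mem_cons_self) X,
      ih (fun d hd => hcomm d (List.mem_cons_of_mem c hd))]

lemma sw_slide {b : β} {u : List β}
    (hcomm : ∀ c ∈ u, ∀ X, act (act X b) c = act (act X c) b) :
    FeqW act (b :: u) (u ++ [b]) := by
  intro X
  rw [appW_cons, appW_append, sw_act_slide act hcomm X]
  rfl

lemma sw_pull_front {b : β} {u v : List β}
    (hcomm : ∀ c ∈ u, ∀ X, act (act X b) c = act (act X c) b) :
    FeqW act (u ++ b :: v) (b :: (u ++ v)) := by
  intro X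
  rw [appW_append, appW_cons, appW_cons, appW_append,
    ← sw_act_slide act hcomm X]

lemma cjW_comp {m1 m2 s t u : List β} (h1 : CjW act m1 s t) (h2 : CjW act m2 t u) :
    CjW act (m1 ++ m2) s u := by
  intro X
  rw [appW_append, h1 X, h2 (appW act m1 X), appW_append]

lemma cjW_rotate (u v : List β) : CjW act u (u ++ v) (v ++ u) := by
  intro X
  rw [appW_append, appW_append]

lemma cjW_left {m s s' t : List β} (h : FeqW act s s') (hc : CjW act m s' t) :
    CjW act m s t := by
  intro X
  rw [h X]
  exact hc X

lemma cjW_right {m s t t' : List β} (hc : CjW act m s t') (h : FeqW act t' t) :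
    CjW act m s t := by
  intro X
  rw [← h (appW act m X)]
  exact hc X

lemma cjW_flip {j : β} {u v : List β}
    (hcomm : ∀ c ∈ u, ∀ X, act (act X j) c = act (act X c) j) :
    CjW act [j] (u ++ j :: v) ((u ++ v) ++ [j]) :=
  cjW_left act (sw_pull_front act hcomm) (cjW_rotate act [j] (u ++ v))

end Word
def dscN : ℕ → ℕ → List ℕ
  | 0, _ => []
  | n+1, b => (b + n) :: dscN n b

def EV : ℕ → List ℕ
  | 0 => [0]
  | j+1 => EV j ++ [2*j+2, 2*j+1]

def TGT (r : ℕ) : List ℕ := if r % 2 = 0 then EV (r/2) else EV (r/2) ++ [r]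

def evL (r : ℕ) : List ℕ := (List.range (r+1)).filter (fun n => n % 2 = 0)
def odL (r : ℕ) : List ℕ := (List.range (r+1)).filter (fun n => n % 2 = 1)
def gyrW (r : ℕ) : List ℕ := evL r ++ odL r

lemma dscN_concat : ∀ n b, dscN (n+1) b = dscN n (b+1) ++ [b] := by
  intro n
  induction n with
  | zero => intro b; rfl
  | succ n ih =>
    intro b
    show (b + (n+1)) :: dscN (n+1) b = ((b+1) + n) :: dscN n (b+1) ++ [b]
    rw [ih b]
    congr 1
    omega

lemma mem_dscN : ∀ n b x, x ∈ dscN n b ↔ b ≤ x ∧ x < b + n := by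
  intro n
  induction n with
  | zero => intro b x; simp [dscN]
  | succ n ih =>
    intro b x
    simp only [dscN, List.mem_cons, ih]
    omega

lemma EV_le : ∀ j, ∀ a ∈ EV j, a ≤ 2*j := by
  intro j
  induction j with
  | zero => intro a ha; simp [EV] at ha; omega
  | succ j ih =>
    intro a ha
    simp only [EV, List.mem_append, List.mem_cons] at ha
    rcases ha with h | h
    · have := ih a h; omega
    · simp at h; omega

lemma mem_evL {r c : ℕ} (h : c ∈ evL r) : c % 2 = 0 ∧ c ≤ r := by
  simp only [evL, List.mem_filter, List.mem_range, decide_eq_true_eq] at h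
  omega

lemma mem_odL {r c : ℕ} (h : c ∈ odL r) : c % 2 = 1 ∧ c ≤ r := by
  simp only [odL, List.mem_filter, List.mem_range, decide_eq_true_eq] at h
  omega

lemma evL_step (r : ℕ) (h : (r+2) % 2 = 0) : evL (r+2) = evL r ++ [r+2] := by
  have h1 : (r+1) % 2 = 1 := by omega
  have h3 : r % 2 = 0 := by omega
  simp [evL, List.range_succ, List.filter_append, List.filter_cons, h, h1, h3]

lemma odL_step (r : ℕ) (h : (r+2) % 2 = 0) : odL (r+2) = odL r ++ [r+1] := by
  have h1 : (r+1) % 2 = 1 := by omega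
  have h3 : r % 2 = 0 := by omega
  simp [odL, List.range_succ, List.filter_append, List.filter_cons, h, h1, h3]

lemma evL_step' (r : ℕ) (h : (r+2) % 2 = 1) : evL (r+2) = evL r ++ [r+1] := by
  have h1 : (r+1) % 2 = 0 := by omega
  have h3 : r % 2 = 1 := by omega
  simp [evL, List.range_succ, List.filter_append, List.filter_cons, h, h1, h3]

lemma odL_step' (r : ℕ) (h : (r+2) % 2 = 1) : odL (r+2) = odL r ++ [r+2] := by
  have h1 : (r+1) % 2 = 0 := by omega
  have h3 : r % 2 = 1 := by omega
  simp [odL, List.range_succ, List.filter_append, List.filter_cons, h, h1, h3]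

section NWord
variable {J : Type*} (act : J → ℕ → J)

lemma sw_phase (hcm : ∀ i j, i ≠ j + 1 → j ≠ i + 1 → ∀ X, act (act X i) j = act (act X j) i) (p' : ℕ) (A : List ℕ) (hA : ∀ a ∈ A, a ≤ p') :
    ∀ n tail, CjW act (dscN n (p'+2)) (A ++ dscN (n+2) p' ++ tail)
      ((A ++ [p'+1, p']) ++ (tail ++ dscN n (p'+2))) := by
  intro n
  induction n with
  | zero =>
    intro tail
    have e0 : dscN 0 (p'+2) = ([] : List ℕ) := rfl
    have e1 : dscN 2 p' = [p'+1, p'] := rfl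
    have e2 : (tail ++ dscN 0 (p'+2)) = tail := by simp [dscN]
    rw [e2, e1, e0]
    intro X
    rfl
  | succ n ih =>
    intro tail
    have harith : p' + (n + 2) = p' + 2 + n := by omega
    -- step 1 : flip the head letter p' + (n+2)
    have hcomm : ∀ c ∈ A, ∀ X,
        act (act X (p' + (n+2))) c = act (act X c) (p' + (n+2)) := by
      intro c hc X
      have := hA c hc
      exact hcm (p' + (n+2)) c (by omega) (by omega) X
    have step1 : CjW act [p' + (n+2)]
        (A ++ (p' + (n+2)) :: (dscN (n+2) p' ++ tail))
        ((A ++ (dscN (n+2) p' ++ tail)) ++ [p' + (n+2)]) :=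
      cjW_flip act hcomm
    have e3 : A ++ dscN (n+3) p' ++ tail
        = A ++ (p' + (n+2)) :: (dscN (n+2) p' ++ tail) := by
      show A ++ ((p' + (n+2)) :: dscN (n+2) p') ++ tail = _
      simp [List.append_assoc]
    have e4 : (A ++ (dscN (n+2) p' ++ tail)) ++ [p' + (n+2)]
        = A ++ dscN (n+2) p' ++ (tail ++ [p' + (n+2)]) := by
      simp [List.append_assoc]
    have step2 := ih (tail ++ [p' + (n+2)])
    have comp := cjW_comp act (e4 ▸ (e3 ▸ step1)) step2
    have e5 : [p' + (n+2)] ++ dscN n (p'+2) = dscN (n+1) (p'+2) := by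
      simp [dscN, harith]
    have e6 : (tail ++ [p' + (n+2)]) ++ dscN n (p'+2) = tail ++ dscN (n+1) (p'+2) := by
      rw [List.append_assoc, e5]
    rw [e5] at comp
    rw [e6] at comp
    exact comp

lemma sw_run (hcm : ∀ i j, i ≠ j + 1 → j ≠ i + 1 → ∀ X, act (act X i) j = act (act X j) i) : ∀ n, ∀ j, ∃ m, CjW act m (EV j ++ dscN n (2*j+1)) (TGT (2*j+n)) := by
  intro n
  induction n using Nat.strong_induction_on with
  | _ n ih =>
    match n with
    | 0 =>
      intro j
      refine ⟨[], ?_⟩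
      have h1 : TGT (2*j+0) = EV j := by
        have ha : (2*j+0) % 2 = 0 := by omega
        have hb : (2*j+0) / 2 = j := by omega
        simp [TGT, ha, hb]
      rw [h1]
      have e0 : dscN 0 (2*j+1) = ([] : List ℕ) := rfl
      rw [e0, List.append_nil]
      intro X
      rfl
    | 1 =>
      intro j
      refine ⟨[], ?_⟩
      have h1 : TGT (2*j+1) = EV j ++ [2*j+1] := by
        have ha : (2*j+1) % 2 = 1 := by omega
        have hb : (2*j+1) / 2 = j := by omega
        simp [TGT, ha, hb]
      rw [h1]
      have h2 : dscN 1 (2*j+1) = [2*j+1] := rfl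
      rw [h2]
      intro X
      rfl
    | (n+2) =>
      intro j
      have hph := sw_phase act hcm (2*j+1) (EV j)
        (fun a ha => le_trans (EV_le j a ha) (by omega)) n []
      have e1 : EV j ++ dscN (n+2) (2*j+1) ++ ([] : List ℕ)
          = EV j ++ dscN (n+2) (2*j+1) := by simp
      have e2 : (EV j ++ [2*j+1+1, 2*j+1]) ++ (([] : List ℕ) ++ dscN n (2*j+1+2))
          = EV (j+1) ++ dscN n (2*(j+1)+1) := by
        have : EV (j+1) = EV j ++ [2*j+2, 2*j+1] := rfl
        rw [this]
        have h3 : 2*j+1+1 = 2*j+2 := by omega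
        have h4 : 2*j+1+2 = 2*(j+1)+1 := by omega
        rw [h3, h4]
        simp
      rw [e1, e2] at hph
      obtain ⟨m2, hm2⟩ := ih n (by omega) (j+1)
      have e3 : 2*(j+1)+n = 2*j+(n+2) := by omega
      rw [e3] at hm2
      exact ⟨_, cjW_comp act hph hm2⟩

lemma sw_tgt_gyr_pair (hcm : ∀ i j, i ≠ j + 1 → j ≠ i + 1 → ∀ X, act (act X i) j = act (act X j) i) : ∀ k, FeqW act (TGT (2*k)) (gyrW (2*k)) ∧
    FeqW act (TGT (2*k+1)) (gyrW (2*k+1)) := by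
  intro k
  induction k with
  | zero =>
    constructor
    · have h1 : TGT 0 = [0] := by simp [TGT, EV]
      have h2 : gyrW 0 = [0] := by simp [gyrW, evL, odL, List.range_succ]
      rw [h1, h2]
      intro X; rfl
    · have h1 : TGT 1 = [0, 1] := by simp [TGT, EV]
      have h2 : gyrW 1 = [0, 1] := by
        simp [gyrW, evL, odL, List.range_succ]
      rw [h1, h2]
      intro X; rfl
  | succ k ih =>
    have hbound_od : ∀ c ∈ odL (2*k), ∀ X,
        act (act X (2*k+2)) c = act (act X c) (2*k+2) := by
      intro c hc X
      have := mem_odL hc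
      exact hcm (2*k+2) c (by omega) (by omega) X
    have hbound_ev : ∀ c ∈ evL (2*k+1), ∀ X,
        act (act X (2*k+2)) c = act (act X c) (2*k+2) := by
      intro c hc X
      have := mem_evL hc
      exact hcm (2*k+2) c (by omega) (by omega) X
    have hbound_EV : ∀ c ∈ EV k, ∀ X,
        act (act X (2*k+2)) c = act (act X c) (2*k+2) := by
      intro c hc X
      have := EV_le k c hc
      exact hcm (2*k+2) c (by omega) (by omega) X
    constructor
    · -- even case : r = 2k+2
      have e0 : 2*(k+1) = 2*k+2 := by omega
      rw [e0]
      have h1 : TGT (2*k+2) = (TGT (2*k)) ++ [2*k+2, 2*k+1] := by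
        have ha : (2*k+2) % 2 = 0 := by omega
        have hb : (2*k+2) / 2 = k+1 := by omega
        have hc' : (2*k) % 2 = 0 := by omega
        have hd : (2*k) / 2 = k := by omega
        simp [TGT, ha, hb, hc', hd, EV]
      have h2 : gyrW (2*k+2) = (evL (2*k) ++ [2*k+2]) ++ (odL (2*k) ++ [2*k+1]) := by
        rw [gyrW, evL_step (2*k) (by omega), odL_step (2*k) (by omega)]
      rw [h1, h2]
      have hsl := sw_slide act (b := 2*k+2) (u := odL (2*k)) hbound_od
      -- hsl : FeqW ((2k+2) :: odL) (odL ++ [2k+2])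
      have hstep : FeqW act (evL (2*k) ++ ((odL (2*k) ++ [2*k+2]) ++ [2*k+1]))
          (evL (2*k) ++ (((2*k+2) :: odL (2*k)) ++ [2*k+1])) :=
        feqW_append_left act (evL (2*k))
          (feqW_append_right act [2*k+1] (feqW_symm act hsl))
      have eqem1 : gyrW (2*k) ++ [2*k+2, 2*k+1]
          = evL (2*k) ++ ((odL (2*k) ++ [2*k+2]) ++ [2*k+1]) := by
        simp [gyrW, List.append_assoc]
      have eqem2 : evL (2*k) ++ (((2*k+2) :: odL (2*k)) ++ [2*k+1])
          = (evL (2*k) ++ [2*k+2]) ++ (odL (2*k) ++ [2*k+1]) := by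
        simp [List.append_assoc]
      refine feqW_trans act (feqW_append_right act [2*k+2, 2*k+1] ih.1) ?_
      rw [eqem1, ← eqem2]
      exact hstep
    · -- odd case : r = 2k+3
      have e0 : 2*(k+1)+1 = 2*k+3 := by omega
      rw [e0]
      have h1 : TGT (2*k+3) = EV k ++ ((2*k+2) :: ([2*k+1] ++ [2*k+3])) := by
        have ha : (2*k+3) % 2 = 1 := by omega
        have hb : (2*k+3) / 2 = k+1 := by omega
        simp [TGT, ha, hb, EV, List.append_assoc]
      have h2 : gyrW (2*k+3) = (evL (2*k+1) ++ [2*k+2]) ++ (odL (2*k+1) ++ [2*k+3]) := by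
        rw [gyrW, evL_step' (2*k+1) (by omega), odL_step' (2*k+1) (by omega)]
      rw [h1, h2]
      have hpull := sw_pull_front act (b := 2*k+2) (u := EV k)
        (v := [2*k+1] ++ [2*k+3]) hbound_EV
      refine feqW_trans act hpull ?_
      -- (2k+2) :: (EV k ++ [2k+1] ++ [2k+3]) ; note EV k ++ [2k+1] = TGT (2k+1)
      have hT : TGT (2*k+1) = EV k ++ [2*k+1] := by
        have ha : (2*k+1) % 2 = 1 := by omega
        have hb : (2*k+1) / 2 = k := by omega
        simp [TGT, ha, hb]
      have step2 : FeqW act ((2*k+2) :: (EV k ++ ([2*k+1] ++ [2*k+3])))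
          ((2*k+2) :: (gyrW (2*k+1) ++ [2*k+3])) := by
        have h5 : (2*k+2) :: (EV k ++ ([2*k+1] ++ [2*k+3]))
            = [2*k+2] ++ ((EV k ++ [2*k+1]) ++ [2*k+3]) := by simp [List.append_assoc]
        have h6 : (2*k+2) :: (gyrW (2*k+1) ++ [2*k+3])
            = [2*k+2] ++ (gyrW (2*k+1) ++ [2*k+3]) := rfl
        rw [h5, h6, ← hT]
        exact feqW_append_left act [2*k+2]
          (feqW_append_right act [2*k+3] ih.2)
      refine feqW_trans act step2 ?_
      -- (2k+2) :: (evL (2k+1) ++ odL (2k+1) ++ [2k+3]) slide 2k+2 past evL (2k+1)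
      have hpull2 := sw_pull_front act (b := 2*k+2) (u := evL (2*k+1))
        (v := odL (2*k+1) ++ [2*k+3]) hbound_ev
      have := feqW_symm act hpull2
      refine feqW_trans act ?_ (feqW_trans act this ?_)
      · intro X
        rw [show (2*k+2) :: (gyrW (2*k+1) ++ [2*k+3])
            = (2*k+2) :: (evL (2*k+1) ++ (odL (2*k+1) ++ [2*k+3])) by
          simp [gyrW, List.append_assoc]]
      · intro X
        rw [show evL (2*k+1) ++ (2*k+2) :: (odL (2*k+1) ++ [2*k+3])
            = (evL (2*k+1) ++ [2*k+2]) ++ (odL (2*k+1) ++ [2*k+3]) by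
          simp [List.append_assoc]]

lemma sw_tgt_gyr (hcm : ∀ i j, i ≠ j + 1 → j ≠ i + 1 → ∀ X, act (act X i) j = act (act X j) i) : ∀ r, FeqW act (TGT r) (gyrW r) := by
  intro r
  rcases Nat.even_or_odd r with ⟨k, hk⟩ | ⟨k, hk⟩
  · have hr : r = 2 * k := by omega
    rw [hr]
    exact (sw_tgt_gyr_pair act hcm k).1
  · have hr : r = 2 * k + 1 := by omega
    rw [hr]
    exact (sw_tgt_gyr_pair act hcm k).2

lemma sw_main_word (hcm : ∀ i j, i ≠ j + 1 → j ≠ i + 1 → ∀ X, act (act X i) j = act (act X j) i) (r : ℕ) : ∃ m, CjW act m (dscN (r+1) 0) (gyrW r) := by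
  have step0 : CjW act (dscN r 1) (dscN (r+1) 0) ([0] ++ dscN r 1) := by
    have e1 : dscN (r+1) 0 = dscN r 1 ++ [0] := dscN_concat r 0
    rw [e1]
    exact cjW_rotate act (dscN r 1) [0]
  have e2 : [0] ++ dscN r 1 = EV 0 ++ dscN r (2*0+1) := rfl
  rw [e2] at step0
  obtain ⟨m2, hm2⟩ := sw_run act hcm r 0
  have e3 : 2*0+r = r := by omega
  rw [e3] at hm2
  exact ⟨_, cjW_right act (cjW_comp act step0 hm2) (sw_tgt_gyr act hcm r)⟩

end NWord
section Assemble
variable {α : Type*} [Fintype α] [PartialOrder α]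

noncomputable def swBl (rk : α → ℕ) (i : ℕ) : List α :=
  (Finset.univ.filter (fun a => rk a = i)).toList

noncomputable def swWordOf (rk : α → ℕ) (s : List ℕ) : List α :=
  s.foldr (fun i acc => swBl rk i ++ acc) []

lemma swWordOf_nil (rk : α → ℕ) : swWordOf rk [] = [] := rfl

lemma swWordOf_cons (rk : α → ℕ) (i : ℕ) (s : List ℕ) :
    swWordOf rk (i :: s) = swBl rk i ++ swWordOf rk s := rfl

lemma mem_swBl {rk : α → ℕ} {i : ℕ} {a : α} : a ∈ swBl rk i ↔ rk a = i := by
  simp [swBl]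

lemma applyToggles_append (u v : List α) (X : {S : Set α // IsLowerSet S}) :
    applyToggles (u ++ v) X = applyToggles v (applyToggles u X) :=
  List.foldl_append

lemma mem_swWordOf {rk : α → ℕ} {a : α} :
    ∀ {s : List ℕ}, a ∈ swWordOf rk s ↔ rk a ∈ s := by
  intro s
  induction s with
  | nil => simp [swWordOf_nil]
  | cons i s' ih =>
    rw [swWordOf_cons]
    simp only [List.mem_append, List.mem_cons, ih, mem_swBl]

lemma swWordOf_nodup (rk : α → ℕ) :
    ∀ s : List ℕ, s.Nodup → (swWordOf rk s).Nodup := by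
  intro s
  induction s with
  | nil => intro _; rw [swWordOf_nil]; exact List.nodup_nil
  | cons i s' ih =>
    intro hnd
    have h1 := (List.nodup_cons.mp hnd).1
    have h2 := (List.nodup_cons.mp hnd).2
    rw [swWordOf_cons]
    refine List.Nodup.append (Finset.nodup_toList _) (ih h2) ?_
    intro a ha1 ha2
    have e1 : rk a = i := mem_swBl.mp ha1
    have e2 : rk a ∈ s' := mem_swWordOf.mp ha2
    exact h1 (e1 ▸ e2)

lemma swWordOf_pairwise (rk : α → ℕ) (hrk_lt : ∀ a b : α, a < b → rk a < rk b) :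
    ∀ s : List ℕ, s.Pairwise (· > ·) →
      (swWordOf rk s).Pairwise (fun a b => ¬ a < b) := by
  intro s
  induction s with
  | nil => intro _; rw [swWordOf_nil]; exact List.Pairwise.nil
  | cons i s' ih =>
    intro hpw
    have h1 := (List.pairwise_cons.mp hpw).1
    have h2 := (List.pairwise_cons.mp hpw).2
    rw [swWordOf_cons, List.pairwise_append]
    refine ⟨?_, ih h2, ?_⟩
    · apply List.pairwise_of_forall_mem_list
      intro a ha b hb hab
      have := hrk_lt a b hab
      rw [mem_swBl.mp ha, mem_swBl.mp hb] at this
      omega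
    · intro a ha b hb hab
      have hj := mem_swWordOf.mp hb
      have := h1 (rk b) hj
      have h3 := hrk_lt a b hab
      rw [mem_swBl.mp ha] at h3
      omega

lemma sw_comm_rk (rk : α → ℕ) (hrk1 : ∀ a b : α, a ⋖ b → rk b = rk a + 1)
    (p q : α) (h1 : rk q ≠ rk p + 1) (h2 : rk p ≠ rk q + 1)
    (X : {S : Set α // IsLowerSet S}) :
    togGen p (togGen q X) = togGen q (togGen p X) := by
  by_cases h : p = q
  · subst h; rfl
  · exact sw_comm p q h (fun hc => h1 (hrk1 p q hc)) (fun hc => h2 (hrk1 q p hc)) X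

lemma sw_tog_slide (a : α) (C : List α)
    (hcomm : ∀ c ∈ C, ∀ X, togGen c (togGen a X) = togGen a (togGen c X)) :
    ∀ X, applyToggles C (togGen a X) = togGen a (applyToggles C X) := by
  induction C with
  | nil => intro X; rfl
  | cons c C' ih =>
    intro X
    have e1 : applyToggles (c :: C') (togGen a X)
        = applyToggles C' (togGen c (togGen a X)) := rfl
    rw [e1, hcomm c (List.mem_cons_self) X,
      ih (fun d hd => hcomm d (List.mem_cons_of_mem c hd)) (togGen c X)]
    rfl

lemma sw_lists_comm (A C : List α)
    (hc : ∀ p ∈ A, ∀ q ∈ C, ∀ X, togGen p (togGen q X) = togGen q (togGen p X)) :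
    ∀ X, applyToggles C (applyToggles A X) = applyToggles A (applyToggles C X) := by
  induction A with
  | nil => intro X; rfl
  | cons a A' ih =>
    intro X
    have hs := sw_tog_slide a C
      (fun c hc' X' => (hc a (List.mem_cons_self) c hc' X').symm)
    have step1 : applyToggles C (applyToggles (a :: A') X)
        = applyToggles A' (applyToggles C (togGen a X)) :=
      ih (fun p hp q hq X' => hc p (List.mem_cons_of_mem a hp) q hq X') (togGen a X)
    rw [step1, hs X]
    rfl

noncomputable def swAct (rk : α → ℕ) :
    {S : Set α // IsLowerSet S} → ℕ → {S : Set α // IsLowerSet S} :=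
  fun X i => applyToggles (swBl rk i) X

lemma swAct_hcm (rk : α → ℕ) (hrk1 : ∀ a b : α, a ⋖ b → rk b = rk a + 1) :
    ∀ i j, i ≠ j + 1 → j ≠ i + 1 → ∀ X,
      swAct rk (swAct rk X i) j = swAct rk (swAct rk X j) i := by
  intro i j h1 h2 X
  refine sw_lists_comm (swBl rk i) (swBl rk j) ?_ X
  intro p hp q hq X'
  have e1 := mem_swBl.mp hp
  have e2 := mem_swBl.mp hq
  exact sw_comm_rk rk hrk1 p q (by omega) (by omega) X'

lemma appW_swAct (rk : α → ℕ) :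
    ∀ (s : List ℕ) X, appW (swAct rk) s X = applyToggles (swWordOf rk s) X := by
  intro s
  induction s with
  | nil => intro X; rfl
  | cons i s' ih =>
    intro X
    rw [appW_cons, ih, swWordOf_cons]
    exact (applyToggles_append _ _ _).symm

lemma sw_rk_lt (rk : α → ℕ) (hrk1 : ∀ a b : α, a ⋖ b → rk b = rk a + 1) :
    ∀ b a : α, a < b → rk a < rk b := by
  classical
  have hwf : WellFounded ((· < ·) : α → α → Prop) := wellFounded_lt
  intro b
  refine hwf.induction (C := fun x => ∀ a : α, a < x → rk a < rk x) b ?_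
  intro x ih a hab
  have hne : (Finset.univ.filter (fun y => a ≤ y ∧ y < x)).Nonempty :=
    ⟨a, by simp [hab]⟩
  obtain ⟨c, hcM⟩ := Finset.exists_maximal hne
  have hc : c ∈ Finset.univ.filter (fun y => a ≤ y ∧ y < x) := hcM.prop
  have hcmax : ∀ z ∈ Finset.univ.filter (fun y => a ≤ y ∧ y < x), ¬ c < z :=
    fun z hz => hcM.not_gt hz
  simp only [Finset.mem_filter, Finset.mem_univ, true_and] at hc
  have hcx : c ⋖ x := by
    refine ⟨hc.2, ?_⟩
    intro z hz1 hz2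
    have hzmem : z ∈ Finset.univ.filter (fun y => a ≤ y ∧ y < x) := by
      simp only [Finset.mem_filter, Finset.mem_univ, true_and]
      exact ⟨hc.1.trans hz1.le, hz2⟩
    exact hcmax z hzmem hz1
  have hrx : rk x = rk c + 1 := hrk1 c x hcx
  rcases eq_or_lt_of_le hc.1 with h | h
  · rw [← h] at hrx
    omega
  · have := ih c hc.2 a h
    omega

lemma dscN_pairwise : ∀ n b, (dscN n b).Pairwise (· > ·) := by
  intro n
  induction n with
  | zero => intro b; simp [dscN]
  | succ n ih =>
    intro b
    rw [dscN, List.pairwise_cons]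
    refine ⟨?_, ih b⟩
    intro x hx
    have := (mem_dscN n b x).mp hx
    omega

lemma sw_bij : ∀ (w : List α), Function.Bijective (fun X => applyToggles w X) := by
  intro w
  induction w with
  | nil => exact Function.bijective_id
  | cons q w' ih =>
    have h1 : Function.Bijective (fun X : {S : Set α // IsLowerSet S} => togGen q X) :=
      Function.Involutive.bijective (fun X => sw_togGen_invol q X)
    exact Function.Bijective.comp ih h1

end Assemble

/-- For any finite ranked poset `P` (with rank function `rk`
vanishing on minimal elements and increasing by exactly 1 along covering relations),
rowmotion and gyration are conjugate elements of the toggle group `T(P)`: for any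
enumeration `L` of the elements of `P` listing all elements of even rank before all
elements of odd rank — so that `Gyr = applyToggles L` first toggles the even ranks
and then the odd ranks — there is an element `φ = applyToggles M` of the toggle
group, a bijection of `J(P)`, with `φ ∘ Row = Gyr ∘ φ`. -/
theorem rowmotion_gyration_conjugate {α : Type*} [Fintype α] [PartialOrder α]
    (rk : α → ℕ)
    (hrk0 : ∀ a : α, (∀ b : α, b ≤ a → b = a) → rk a = 0)
    (hrk1 : ∀ a b : α, a ⋖ b → rk b = rk a + 1)
    (evens odds L : List α) (hL : L = evens ++ odds)
    (hnodup : L.Nodup) (hall : ∀ a : α, a ∈ L)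
    (he : ∀ a ∈ evens, Even (rk a)) (ho : ∀ a ∈ odds, Odd (rk a)) :
    ∃ M : List α,
      Function.Bijective (applyToggles M) ∧
      ∀ X : {S : Set α // IsLowerSet S},
        applyToggles M (rowmotion X) = applyToggles L (applyToggles M X) := by
  classical
  set r := Finset.univ.sup rk with hrdef
  have hrk_le : ∀ a : α, rk a ≤ r := fun a => Finset.le_sup (Finset.mem_univ a)
  have hrk_lt : ∀ a b : α, a < b → rk a < rk b := fun a b h => sw_rk_lt rk hrk1 b a h
  have hcm := swAct_hcm rk hrk1
  obtain ⟨mw, hmw⟩ := sw_main_word (swAct rk) hcm r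
  have hrow : ∀ X, rowmotion X = appW (swAct rk) (dscN (r+1) 0) X := by
    intro X
    rw [appW_swAct]
    refine (sw_CFF X (swWordOf rk (dscN (r+1) 0)) ?_ ?_ ?_).symm
    · exact swWordOf_nodup rk _
        (List.Pairwise.imp (fun h => ne_of_gt h) (dscN_pairwise _ _))
    · exact swWordOf_pairwise rk hrk_lt _ (dscN_pairwise _ _)
    · intro a
      rw [mem_swWordOf, mem_dscN]
      have := hrk_le a
      omega
  have hev_mem : ∀ a : α, a ∈ evens ↔ rk a % 2 = 0 := by
    intro a
    constructor
    · intro h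
      obtain ⟨k, hk⟩ := he a h
      omega
    · intro h
      have hmem := hall a
      rw [hL, List.mem_append] at hmem
      rcases hmem with h' | h'
      · exact h'
      · obtain ⟨k, hk⟩ := ho a h'
        omega
  have hod_mem : ∀ a : α, a ∈ odds ↔ rk a % 2 = 1 := by
    intro a
    constructor
    · intro h
      obtain ⟨k, hk⟩ := ho a h
      omega
    · intro h
      have hmem := hall a
      rw [hL, List.mem_append] at hmem
      rcases hmem with h' | h'
      · obtain ⟨k, hk⟩ := he a h'
        omega
      · exact h'
  have hndL := hnodup
  rw [hL] at hndL
  obtain ⟨hndE, hndO, hdisj⟩ := List.nodup_append'.mp hndL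
  have hevperm : evens.Perm (swWordOf rk (evL r)) := by
    refine (List.perm_ext_iff_of_nodup hndE
      (swWordOf_nodup rk _ (List.Nodup.filter _ (List.nodup_range)))).mpr ?_
    intro a
    rw [hev_mem, mem_swWordOf]
    have hb := hrk_le a
    simp only [evL, List.mem_filter, List.mem_range, decide_eq_true_eq]
    omega
  have hodperm : odds.Perm (swWordOf rk (odL r)) := by
    refine (List.perm_ext_iff_of_nodup hndO
      (swWordOf_nodup rk _ (List.Nodup.filter _ (List.nodup_range)))).mpr ?_
    intro a
    rw [hod_mem, mem_swWordOf]
    have hb := hrk_le a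
    simp only [odL, List.mem_filter, List.mem_range, decide_eq_true_eq]
    omega
  have hevcomm : ∀ x ∈ evens, ∀ y ∈ evens,
      ∀ z : {S : Set α // IsLowerSet S}, togGen y (togGen x z) = togGen x (togGen y z) := by
    intro x hx y hy z
    have e1 := (hev_mem x).mp hx
    have e2 := (hev_mem y).mp hy
    exact sw_comm_rk rk hrk1 y x (by omega) (by omega) z
  have hodcomm : ∀ x ∈ odds, ∀ y ∈ odds,
      ∀ z : {S : Set α // IsLowerSet S}, togGen y (togGen x z) = togGen x (togGen y z) := by
    intro x hx y hy z
    have e1 := (hod_mem x).mp hx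
    have e2 := (hod_mem y).mp hy
    exact sw_comm_rk rk hrk1 y x (by omega) (by omega) z
  have hev_fold : ∀ X, applyToggles evens X = applyToggles (swWordOf rk (evL r)) X :=
    fun X => List.Perm.foldl_eq' hevperm hevcomm X
  have hod_fold : ∀ X, applyToggles odds X = applyToggles (swWordOf rk (odL r)) X :=
    fun X => List.Perm.foldl_eq' hodperm hodcomm X
  have hgyr : ∀ Y, applyToggles L Y = appW (swAct rk) (gyrW r) Y := by
    intro Y
    rw [hL, applyToggles_append, hev_fold, hod_fold]
    have e : appW (swAct rk) (gyrW r) Y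
        = appW (swAct rk) (odL r) (appW (swAct rk) (evL r) Y) := appW_append _ _ _ _
    rw [e, appW_swAct, appW_swAct]
  refine ⟨swWordOf rk mw, sw_bij _, ?_⟩
  intro X
  rw [hrow X, hgyr]
  have h1 : applyToggles (swWordOf rk mw) (appW (swAct rk) (dscN (r+1) 0) X)
      = appW (swAct rk) mw (appW (swAct rk) (dscN (r+1) 0) X) := (appW_swAct rk mw _).symm
  have h2 : applyToggles (swWordOf rk mw) X = appW (swAct rk) mw X :=
    (appW_swAct rk mw X).symm
  rw [h1, h2]
  exact hmw X
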